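/- Let F be a real p×m matrix, H ∈ ℝ^p, and let P₀ = {U ∈ ℝ^m : F U ≤ H} be nonempty. Let F' be a real q×m matrix, H' ∈ ℝ^q, and P = {U ∈ ℝ^m : F' U ≤ H'}. Then for every scalar s > 0 and vector r ∈ ℝ^m, the inclusion P₀ ⊆ s P + r holds if and only if there exists a real q×p matrix G with all entries nonnegative such that G F = F' and G H ≤ s H' + F' r (inequalities entrywise). -/

import Mathlib

open Finset in
lemma carath_aux {ι : Type*} [Fintype ι] [DecidableEq ι] {M : Type*} [AddCommGroup M]
    [Module ℝ M] (v : ι → M) :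
    ∀ (n : ℕ) (S : Finset ι), S.card ≤ n → ∀ y : ι → ℝ, (∀ i, 0 ≤ y i) →
      (∀ i ∉ S, y i = 0) →
      ∃ T : Finset ι, T ⊆ S ∧ ∃ z : ι → ℝ, (∀ i, 0 ≤ z i) ∧ (∀ i ∉ T, z i = 0) ∧
        (∑ i, z i • v i = ∑ i, y i • v i) ∧
        LinearIndependent ℝ (fun i : ↥T => v i) := by
  intro n
  induction n with
  | zero =>
      intro S hS y hy hyS
      rw [Nat.le_zero, Finset.card_eq_zero] at hS
      subst hS
      refine ⟨∅, le_rfl, y, hy, hyS, rfl, ?_⟩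
      have : IsEmpty ↥(∅ : Finset ι) := ⟨fun x => absurd x.2 (Finset.notMem_empty _)⟩
      exact linearIndependent_empty_type
  | succ n ih =>
      intro S hS y hy hyS
      by_cases hind : LinearIndependent ℝ (fun i : ↥S => v i)
      · exact ⟨S, le_rfl, y, hy, hyS, rfl, hind⟩
      · obtain ⟨g, hg0, i₁, hi₁⟩ := Fintype.not_linearIndependent_iff.mp hind
        -- WLOG some coefficient is positive
        obtain ⟨g, hg0, i₁, hi₁⟩ :
            ∃ g : ↥S → ℝ, ∑ i : ↥S, g i • v ↑i = 0 ∧ ∃ i, 0 < g i := by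
          rcases lt_or_gt_of_ne hi₁ with h | h
          · refine ⟨-g, ?_, i₁, by simpa using h⟩
            simp only [Pi.neg_apply, neg_smul, Finset.sum_neg_distrib, hg0, neg_zero]
          · exact ⟨g, hg0, i₁, h⟩
        set d : ι → ℝ := fun i => if h : i ∈ S then g ⟨i, h⟩ else 0 with hd
        have hdsum : ∑ i, d i • v i = 0 := by
          rw [← Finset.sum_subset (Finset.subset_univ S)
            (by intro i _ hiS; simp [hd, hiS])]
          rw [← Finset.sum_attach S (fun i => d i • v i)]
          simpa [hd] using hg0
        have hT'ne : (S.filter fun i => 0 < d i).Nonempty := by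
          refine ⟨↑i₁, Finset.mem_filter.mpr ⟨i₁.2, ?_⟩⟩
          simpa [hd, i₁.2] using hi₁
        obtain ⟨i₀, hi₀mem, hi₀min⟩ :=
          Finset.exists_min_image (S.filter fun i => 0 < d i) (fun i => y i / d i) hT'ne
        obtain ⟨hi₀S, hi₀pos⟩ := Finset.mem_filter.mp hi₀mem
        set lam := y i₀ / d i₀ with hlam
        have hlam0 : 0 ≤ lam := div_nonneg (hy i₀) hi₀pos.le
        set z : ι → ℝ := fun i => y i - lam * d i with hz
        have hz0 : ∀ i, 0 ≤ z i := by
          intro i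
          by_cases hiS : i ∈ S
          · by_cases hdi : 0 < d i
            · have := hi₀min i (Finset.mem_filter.mpr ⟨hiS, hdi⟩)
              have : lam * d i ≤ y i := (le_div_iff₀ hdi).mp this
              simpa [hz] using sub_nonneg.mpr this
            · push_neg at hdi
              have : lam * d i ≤ 0 := mul_nonpos_of_nonneg_of_nonpos hlam0 hdi
              have := sub_nonneg.mpr (this.trans (hy i))
              simp only [hz]
              nlinarith [hy i]
          · simp [hz, hd, hiS, hyS i hiS]
        have hzS : ∀ i ∉ S.erase i₀, z i = 0 := by
          intro i hi
          by_cases hiS : i ∈ S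
          · have : i = i₀ := by
              by_contra hne
              exact hi (Finset.mem_erase.mpr ⟨hne, hiS⟩)
            subst this
            simp [hz, hlam, div_mul_cancel₀ _ hi₀pos.ne']
          · simp [hz, hd, hiS, hyS i hiS]
        have hsum : ∑ i, z i • v i = ∑ i, y i • v i := by
          simp only [hz, sub_smul, mul_smul, Finset.sum_sub_distrib]
          rw [← Finset.smul_sum, hdsum, smul_zero, sub_zero]
        have hcard : (S.erase i₀).card ≤ n := by
          have := Finset.card_erase_lt_of_mem hi₀S
          omega
        obtain ⟨T, hTsub, z', h1, h2, h3, h4⟩ := ih (S.erase i₀) hcard z hz0 hzS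
        exact ⟨T, hTsub.trans (Finset.erase_subset _ _), z', h1, h2, h3.trans hsum, h4⟩

lemma isClosed_coneSpan {ι : Type*} [Fintype ι] [DecidableEq ι] {E : Type*}
    [NormedAddCommGroup E] [NormedSpace ℝ E] [FiniteDimensional ℝ E] (v : ι → E) :
    IsClosed {x : E | ∃ y : ι → ℝ, (∀ i, 0 ≤ y i) ∧ ∑ i, y i • v i = x} := by
  classical
  -- the linear "combination" map for a subset T
  have key : {x : E | ∃ y : ι → ℝ, (∀ i, 0 ≤ y i) ∧ ∑ i, y i • v i = x} =
      ⋃ (T : {T : Finset ι // LinearIndependent ℝ (fun i : ↥T => v i)}),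
        (fun y : ↥T.1 → ℝ => ∑ i : ↥T.1, y i • v ↑i) '' {y | ∀ i, 0 ≤ y i} := by
    ext x
    constructor
    · rintro ⟨y, hy0, rfl⟩
      obtain ⟨T, -, z, hz0, hzT, hsum, hind⟩ :=
        carath_aux v (Finset.univ.card) Finset.univ le_rfl y hy0 (by simp)
      refine Set.mem_iUnion.mpr ⟨⟨T, hind⟩, ⟨fun i => z ↑i, fun i => hz0 _, ?_⟩⟩
      show (∑ i : ↥T, z ↑i • v ↑i) = _
      rw [← hsum, Finset.sum_coe_sort T (fun i => z i • v i)]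
      exact Finset.sum_subset (Finset.subset_univ T)
        (by intro i _ hiT; rw [hzT i hiT, zero_smul])
    · rintro ⟨_, ⟨⟨T, hind⟩, rfl⟩, y, hy0, rfl⟩
      refine ⟨fun i => if h : i ∈ T then y ⟨i, h⟩ else 0, ?_, ?_⟩
      · intro i; by_cases h : i ∈ T <;> simp [h, hy0 _]
      · rw [← Finset.sum_subset (Finset.subset_univ T)
          (by intro i _ hiT; simp [hiT])]
        rw [← Finset.sum_attach T (fun i => (if h : i ∈ T then y ⟨i, h⟩ else 0) • v i)]
        exact Finset.sum_congr rfl (by intro i _; simp [i.2])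
  rw [key]
  apply isClosed_iUnion_of_finite
  rintro ⟨T, hind⟩
  set L : (↥T → ℝ) →ₗ[ℝ] E :=
    { toFun := fun y => ∑ i : ↥T, y i • v ↑i
      map_add' := by intro a b; simp [add_smul, Finset.sum_add_distrib]
      map_smul' := by intro c a; simp [smul_smul, Finset.smul_sum] } with hL
  have hker : LinearMap.ker L = ⊥ := by
    rw [LinearMap.ker_eq_bot']
    intro g hg
    funext i
    exact Fintype.linearIndependent_iff.mp hind g hg i
  have hemb := LinearMap.isClosedEmbedding_of_injective hker
  have hclosed : IsClosed {y : ↥T → ℝ | ∀ i, 0 ≤ y i} := by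
    have : {y : ↥T → ℝ | ∀ i, 0 ≤ y i} = ⋂ i, (fun y : ↥T → ℝ => y i) ⁻¹' Set.Ici 0 := by
      ext y; simp [Set.mem_iInter]
    rw [this]
    exact isClosed_iInter fun i => isClosed_Ici.preimage (continuous_apply i)
  exact hemb.isClosedMap _ hclosed

open scoped InnerProductSpace in
lemma farkas_cone {ι : Type*} [Fintype ι] [DecidableEq ι] {E : Type*}
    [NormedAddCommGroup E] [InnerProductSpace ℝ E] [FiniteDimensional ℝ E]
    (v : ι → E) (c : E)
    (h : ∀ x : E, (∀ i, ⟪v i, x⟫_ℝ ≤ 0) → ⟪c, x⟫_ℝ ≤ 0) :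
    ∃ y : ι → ℝ, (∀ i, 0 ≤ y i) ∧ ∑ i, y i • v i = c := by
  classical
  by_contra hc
  set C : Set E := {x : E | ∃ y : ι → ℝ, (∀ i, 0 ≤ y i) ∧ ∑ i, y i • v i = x} with hC
  have hcC : c ∉ C := by
    intro ⟨y, hy0, hy⟩; exact hc ⟨y, hy0, hy⟩
  set K : ConvexCone ℝ E :=
    { carrier := C
      smul_mem' := by
        rintro t ht x ⟨y, hy0, rfl⟩
        exact ⟨fun i => t * y i, fun i => mul_nonneg ht.le (hy0 i),
          by simp [mul_smul, Finset.smul_sum]⟩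
      add_mem' := by
        rintro x ⟨y, hy0, rfl⟩ x' ⟨y', hy'0, rfl⟩
        exact ⟨fun i => y i + y' i, fun i => add_nonneg (hy0 i) (hy'0 i),
          by simp [add_smul, Finset.sum_add_distrib]⟩ } with hK
  have hne : (K : Set E).Nonempty := ⟨0, ⟨fun _ => 0, fun _ => le_rfl, by simp⟩⟩
  have hcl : IsClosed (K : Set E) := isClosed_coneSpan v
  obtain ⟨x, hx1, hx2⟩ :=
    ProperCone.hyperplane_separation' (⟨K.toPointedCone (.of_nonempty_of_isClosed hne hcl), hcl⟩ : ProperCone ℝ E) (x₀ := c) hcC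
  have hvi : ∀ i, ⟪v i, -x⟫_ℝ ≤ 0 := by
    intro i
    have : v i ∈ K := ⟨fun j => if j = i then 1 else 0, by intro j; positivity,
      by simp⟩
    have := hx1 _ this
    rw [inner_neg_right]
    linarith
  have := h (-x) hvi
  rw [inner_neg_right] at this
  linarith

lemma euclidean_sum_apply {ι κ : Type*} [Fintype κ] (s : Finset ι)
    (f : ι → EuclideanSpace ℝ κ) (j : κ) :
    (∑ i ∈ s, f i) j = ∑ i ∈ s, f i j := by
  induction s using Finset.cons_induction with
  | empty => rfl
  | cons a s ha ih => rw [Finset.sum_cons, Finset.sum_cons, PiLp.add_apply, ih]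

open scoped InnerProductSpace Matrix in
lemma affine_farkas {n m : ℕ} (A : Matrix (Fin n) (Fin m) ℝ) (b : Fin n → ℝ)
    (hfeas : ({x : Fin m → ℝ | A.mulVec x ≤ b}).Nonempty)
    (c : Fin m → ℝ) (d : ℝ)
    (h : ∀ x : Fin m → ℝ, A.mulVec x ≤ b → c ⬝ᵥ x ≤ d) :
    ∃ y : Fin n → ℝ, (∀ i, 0 ≤ y i) ∧ (∀ k, ∑ i, y i * A i k = c k) ∧
      ∑ i, y i * b i ≤ d := by
  classical
  set vv : Option (Fin n) → EuclideanSpace ℝ (Fin m ⊕ Unit) := fun o =>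
    WithLp.toLp 2 (Option.elim o (Sum.elim (fun _ => (0:ℝ)) (fun _ => 1))
      (fun i => Sum.elim (fun k => A i k) (fun _ => b i))) with hvv
  set c' : EuclideanSpace ℝ (Fin m ⊕ Unit) := WithLp.toLp 2 (Sum.elim c (fun _ => d)) with hc'
  have key : ∀ x : EuclideanSpace ℝ (Fin m ⊕ Unit),
      (∀ o, ⟪vv o, x⟫_ℝ ≤ 0) → ⟪c', x⟫_ℝ ≤ 0 := by
    intro x hx
    set u : Fin m → ℝ := fun k => x (Sum.inl k) with hu
    set t : ℝ := x (Sum.inr ()) with ht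
    have hinner : ∀ z : EuclideanSpace ℝ (Fin m ⊕ Unit),
        ⟪z, x⟫_ℝ = ∑ k, z (Sum.inl k) * u k + z (Sum.inr ()) * t := by
      intro z
      simp [PiLp.inner_apply, RCLike.inner_apply, conj_trivial, Fintype.sum_sum_type,
        hu, ht, starRingEnd_apply, star_trivial, mul_comm]
    have htle : t ≤ 0 := by
      have := hx none
      rw [hinner] at this
      simpa [hvv] using this
    have hrow : ∀ i, ∑ k, A i k * u k + b i * t ≤ 0 := by
      intro i
      have := hx (some i)
      rwa [hinner] at this
    rw [hinner]
    show ∑ k, c' (Sum.inl k) * u k + c' (Sum.inr ()) * t ≤ 0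
    simp only [hc', Sum.elim_inl, Sum.elim_inr]
    rcases eq_or_lt_of_le htle with hteq | htlt
    · -- t = 0 case
      obtain ⟨x₀, hx₀⟩ := hfeas
      have hAu : ∀ i, (A.mulVec u) i ≤ 0 := by
        intro i
        have := hrow i
        rw [hteq] at this
        simpa [Matrix.mulVec, dotProduct] using this
      have hcu : c ⬝ᵥ u ≤ 0 := by
        by_contra hpos
        push_neg at hpos
        have hx₀d : c ⬝ᵥ x₀ ≤ d := h x₀ hx₀
        set s : ℝ := (d - c ⬝ᵥ x₀ + 1) / (c ⬝ᵥ u) with hsdef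
        have hnum : 0 < d - c ⬝ᵥ x₀ + 1 := by linarith
        have hs0 : 0 ≤ s := le_of_lt (div_pos hnum hpos)
        have hfeas' : A.mulVec (x₀ + s • u) ≤ b := by
          intro i
          rw [Matrix.mulVec_add, Matrix.mulVec_smul]
          have h1 := hAu i
          have h2 := hx₀ i
          simp only [Pi.add_apply, Pi.smul_apply, smul_eq_mul]
          nlinarith
        have := h _ hfeas'
        rw [dotProduct_add, dotProduct_smul] at this
        have hs : s * (c ⬝ᵥ u) = d - c ⬝ᵥ x₀ + 1 := div_mul_cancel₀ _ hpos.ne'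
        simp only [smul_eq_mul] at this
        linarith
      have hcu' : ∑ k, c k * u k ≤ 0 := by
        simpa [dotProduct] using hcu
      rw [hteq]
      simpa using hcu'
    · -- t < 0 case
      set U : Fin m → ℝ := (-t)⁻¹ • u with hU
      have hnt : 0 < -t := by linarith
      have hfeas' : A.mulVec U ≤ b := by
        intro i
        rw [hU, Matrix.mulVec_smul]
        have h1 := hrow i
        have hAui : (A.mulVec u) i ≤ (-t) * b i := by
          simp only [Matrix.mulVec, dotProduct]
          nlinarith
        simp only [Pi.smul_apply, smul_eq_mul]
        rw [inv_mul_le_iff₀ hnt]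
        linarith [hAui]
      have hdU := h U hfeas'
      have hcu : c ⬝ᵥ u ≤ (-t) * d := by
        rw [hU, dotProduct_smul] at hdU
        simp only [smul_eq_mul] at hdU
        rw [inv_mul_le_iff₀ hnt] at hdU
        linarith
      have : ∑ k, c k * u k ≤ (-t) * d := by
        simpa [dotProduct] using hcu
      nlinarith
  obtain ⟨w, hw0, hwsum⟩ := farkas_cone vv c' key
  refine ⟨fun i => w (some i), fun i => hw0 _, ?_, ?_⟩
  · intro k
    have hk := congrArg
      (fun z : EuclideanSpace ℝ (Fin m ⊕ Unit) =>
        ⟪EuclideanSpace.single (Sum.inl k) (1:ℝ), z⟫_ℝ) hwsum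
    simp only [inner_sum, real_inner_smul_right, EuclideanSpace.inner_single_left,
      conj_trivial, one_mul, hc', Sum.elim_inl, hvv, Fintype.sum_option,
      PiLp.smul_apply, smul_eq_mul, Option.elim_none, Option.elim_some,
      euclidean_sum_apply, PiLp.add_apply, Pi.add_apply,
      mul_zero, zero_add, starRingEnd_apply, star_trivial] at hk
    simpa using hk
  · have hk := congrArg
      (fun z : EuclideanSpace ℝ (Fin m ⊕ Unit) =>
        ⟪EuclideanSpace.single (Sum.inr ()) (1:ℝ), z⟫_ℝ) hwsum
    simp only [inner_sum, real_inner_smul_right, EuclideanSpace.inner_single_left,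
      conj_trivial, one_mul, hc', Sum.elim_inr, hvv, Fintype.sum_option,
      PiLp.smul_apply, smul_eq_mul, Option.elim_none, Option.elim_some,
      euclidean_sum_apply, PiLp.add_apply, Pi.add_apply,
      mul_one, starRingEnd_apply, star_trivial] at hk
    have hle : ∑ i, w (some i) * b i ≤ w none + ∑ i, w (some i) * b i :=
      le_add_of_nonneg_left (hw0 none)
    rw [hk] at hle
    simpa using hle

/-- Feasibility characterization underlying Theorem 1 (inner approximation):
for nonempty `P₀ = {U | F U ≤ H}` and `P = {U | F' U ≤ H'}`, a scalar `s > 0` and a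
vector `r`, the inclusion `P₀ ⊆ s P + r` holds iff there exists a nonnegative matrix
`G` with `G F = F'` and `G H ≤ s H' + F' r`. -/
theorem subset_homothet_iff_nonneg_multiplier
    (p q m : ℕ) (F : Matrix (Fin p) (Fin m) ℝ) (H : Fin p → ℝ)
    (F' : Matrix (Fin q) (Fin m) ℝ) (H' : Fin q → ℝ)
    (hne : ({U : Fin m → ℝ | F.mulVec U ≤ H}).Nonempty)
    (s : ℝ) (hs : 0 < s) (r : Fin m → ℝ) :
    ({U : Fin m → ℝ | F.mulVec U ≤ H}
        ⊆ (fun ξ => s • ξ + r) '' {U : Fin m → ℝ | F'.mulVec U ≤ H'}) ↔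
      ∃ G : Matrix (Fin q) (Fin p) ℝ,
        (∀ i j, 0 ≤ G i j) ∧ G * F = F' ∧ G.mulVec H ≤ s • H' + F'.mulVec r := by
  have hrowiff : ({U : Fin m → ℝ | F.mulVec U ≤ H}
        ⊆ (fun ξ => s • ξ + r) '' {U : Fin m → ℝ | F'.mulVec U ≤ H'}) ↔
      ∀ U : Fin m → ℝ, F.mulVec U ≤ H → F'.mulVec U ≤ s • H' + F'.mulVec r := by
    constructor
    · intro hsub U hU
      obtain ⟨ξ, hξ, hξU⟩ := hsub hU
      have hFU : F'.mulVec U = s • F'.mulVec ξ + F'.mulVec r := by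
        rw [← hξU, Matrix.mulVec_add, Matrix.mulVec_smul]
      rw [hFU]
      intro j
      simp only [Pi.add_apply, Pi.smul_apply, smul_eq_mul]
      have := hξ j
      nlinarith
    · intro hrow U hU
      refine ⟨s⁻¹ • (U - r), ?_, ?_⟩
      · intro j
        rw [Matrix.mulVec_smul, Matrix.mulVec_sub]
        have h1 := hrow U hU j
        simp only [Pi.add_apply, Pi.smul_apply, smul_eq_mul, Pi.sub_apply] at h1 ⊢
        rw [inv_mul_le_iff₀ hs]
        linarith
      · simp only [smul_smul, mul_inv_cancel₀ hs.ne', one_smul]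
        abel
  rw [hrowiff]
  constructor
  · intro hrow
    have haux : ∀ j : Fin q, ∃ y : Fin p → ℝ, (∀ i, 0 ≤ y i) ∧
        (∀ k, ∑ i, y i * F i k = F' j k) ∧
        ∑ i, y i * H i ≤ (s • H' + F'.mulVec r) j := by
      intro j
      refine affine_farkas F H hne (fun k => F' j k) ((s • H' + F'.mulVec r) j) ?_
      intro U hU
      have := hrow U hU j
      simpa [Matrix.mulVec, dotProduct] using this
    choose y hy0 hyF hyH using haux
    refine ⟨Matrix.of (fun j i => y j i), fun j i => hy0 j i, ?_, ?_⟩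
    · ext j k
      rw [Matrix.mul_apply]
      exact hyF j k
    · intro j
      exact hyH j
  · rintro ⟨G, hG0, hGF, hGH⟩ U hU
    intro j
    have h1 : F'.mulVec U j = ∑ i, G j i * F.mulVec U i := by
      rw [← hGF, ← Matrix.mulVec_mulVec]
      rfl
    rw [h1]
    have h2 : ∑ i, G j i * F.mulVec U i ≤ ∑ i, G j i * H i :=
      Finset.sum_le_sum fun i _ => mul_le_mul_of_nonneg_left (hU i) (hG0 j i)
    exact h2.trans (hGH j)
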